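/- If σ ∈ S_{n-1} and τ is obtained by inserting n into the k-th descent (from left to right) of σ, then stat(τ) = stat(σ) + k - 1. -/

import Mathlib

namespace BS

/-- `l` is (the one-line notation of) a permutation of `{1,...,n}`. -/
def isPerm (l : List ℕ) (n : ℕ) : Prop := l.Perm ((List.range n).map (· + 1))

/-- number of inversions -/
def inv (l : List ℕ) : ℕ :=
  ((Finset.range l.length ×ˢ Finset.range l.length).filter
    (fun p => p.1 < p.2 ∧ l.getD p.2 0 < l.getD p.1 0)).card

/-- the set of (0-indexed) descent positions -/
def desSet (l : List ℕ) : Finset ℕ :=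
  (Finset.range (l.length - 1)).filter (fun i => l.getD (i + 1) 0 < l.getD i 0)

def des (l : List ℕ) : ℕ := (desSet l).card

/-- major index: sum of the (1-indexed) descent positions -/
def maj (l : List ℕ) : ℕ := ∑ i ∈ desSet l, (i + 1)

/-- number of occurrences of the generalized pattern ac-b (132, first two letters adjacent) -/
def acb (l : List ℕ) : ℕ :=
  ((Finset.range l.length ×ˢ Finset.range l.length).filter
    (fun p => p.1 + 2 ≤ p.2 ∧ l.getD p.1 0 < l.getD p.2 0 ∧ l.getD p.2 0 < l.getD (p.1 + 1) 0)).card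

/-- number of occurrences of the generalized pattern ba-c (213, first two letters adjacent) -/
def bac (l : List ℕ) : ℕ :=
  ((Finset.range l.length ×ˢ Finset.range l.length).filter
    (fun p => p.1 + 2 ≤ p.2 ∧ l.getD (p.1 + 1) 0 < l.getD p.1 0 ∧ l.getD p.1 0 < l.getD p.2 0)).card

/-- number of occurrences of the generalized pattern cb-a (321, first two letters adjacent) -/
def cba (l : List ℕ) : ℕ :=
  ((Finset.range l.length ×ˢ Finset.range l.length).filter
    (fun p => p.1 + 2 ≤ p.2 ∧ l.getD p.2 0 < l.getD (p.1 + 1) 0 ∧ l.getD (p.1 + 1) 0 < l.getD p.1 0)).card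

/-- Babson–Steingrímsson's statistic stat = (ac-b)+(ba-c)+(cb-a)+(ba) -/
def stat (l : List ℕ) : ℕ := acb l + bac l + cba l + des l

/-- first letter -/
def F (l : List ℕ) : ℕ := l.headD 0

/-- insertion space `j` (i.e. between letters `j-1` and `j`, 0-indexed) is a descent space -/
def isDescSpace (σ : List ℕ) (j : ℕ) : Prop :=
  1 ≤ j ∧ j < σ.length ∧ σ.getD j 0 < σ.getD (j - 1) 0

instance (σ : List ℕ) (j : ℕ) : Decidable (isDescSpace σ j) := by
  unfold isDescSpace; infer_instance

def isAscSpace (σ : List ℕ) (j : ℕ) : Prop :=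
  1 ≤ j ∧ j < σ.length ∧ σ.getD (j - 1) 0 < σ.getD j 0

instance (σ : List ℕ) (j : ℕ) : Decidable (isAscSpace σ j) := by
  unfold isAscSpace; infer_instance

/-- maj-labeling of the insertion spaces `0,...,σ.length`: the final space gets `0`,
descent spaces get `1,...,des σ` from right to left, the remaining spaces get
`des σ + 1, ...` from left to right. -/
def majLabel (σ : List ℕ) (j : ℕ) : ℕ :=
  if j = σ.length then 0
  else if isDescSpace σ j then
    1 + ((Finset.Ico (j + 1) σ.length).filter (fun t => isDescSpace σ t)).card
  else des σ + 1 + ((Finset.range j).filter (fun t => ¬ isDescSpace σ t)).card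

/-- stat-labeling of the insertion spaces: descent spaces and the final space get
`0,...,des σ` from left to right, the initial space gets `des σ + 1`, and ascent
spaces get `des σ + 2, ...` from right to left. -/
def statLabel (σ : List ℕ) (j : ℕ) : ℕ :=
  if j = σ.length then des σ
  else if isDescSpace σ j then ((Finset.range j).filter (fun t => isDescSpace σ t)).card
  else if j = 0 then des σ + 1
  else des σ + 1 + ((Finset.Ico j σ.length).filter (fun t => isAscSpace σ t)).card

/-- index of the insertion space carrying label `i` in the labeling `lab` -/
def spaceOfLabel (lab : List ℕ → ℕ → ℕ) (σ : List ℕ) (i : ℕ) : ℕ :=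
  ((List.range (σ.length + 1)).find? (fun j => decide (lab σ j = i))).getD 0

/-- insert `v` at the space with inv-label `i` (spaces labeled from right to left) -/
def insertAtInvLabel (i : ℕ) (σ : List ℕ) (v : ℕ) : List ℕ :=
  σ.insertIdx (σ.length - i) v

def insertAtMajLabel (i : ℕ) (σ : List ℕ) (v : ℕ) : List ℕ :=
  σ.insertIdx (spaceOfLabel majLabel σ i) v

def insertAtStatLabel (i : ℕ) (σ : List ℕ) (v : ℕ) : List ℕ :=
  σ.insertIdx (spaceOfLabel statLabel σ i) v

/-- inversion table: `c_i` is the inv-label of the space of `π⁽ⁱ⁻¹⁾` that letter `i` occupies -/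
def invTable (π : List ℕ) : List ℕ :=
  (List.range π.length).map (fun k =>
    if k = 0 then 0
    else (π.filter (· ≤ k)).length - (π.filter (· ≤ k + 1)).idxOf (k + 1))

/-- major index table -/
def majTable (π : List ℕ) : List ℕ :=
  (List.range π.length).map (fun k =>
    if k = 0 then 0
    else majLabel (π.filter (· ≤ k)) ((π.filter (· ≤ k + 1)).idxOf (k + 1)))

/-- stat table -/
def statTable (π : List ℕ) : List ℕ :=
  (List.range π.length).map (fun k =>
    if k = 0 then 0
    else statLabel (π.filter (· ≤ k)) ((π.filter (· ≤ k + 1)).idxOf (k + 1)))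

/-- `w ∈ E_n`, i.e. `w = w₁⋯wₙ` with `0 ≤ wᵢ ≤ i - 1` -/
def memE (w : List ℕ) (n : ℕ) : Prop :=
  w.length = n ∧ ∀ k < n, w.getD k 0 ≤ k

/-- the map ρ : complement-reverse `π⁽ᵏ⁾` (k the first letter) behind its first letter,
then reinsert `k+1,…,n` at the maj-labels given by the stat table of `π`. -/
def rho (π : List ℕ) : List ℕ :=
  let n := π.length
  let k := π.headD 0
  let s := statTable π
  (List.range (n - k)).foldl
    (fun σ m => insertAtMajLabel (s.getD (k + m) 0) σ (k + m + 1))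
    (k :: (((π.filter (· ≤ k)).tail.map (fun x => k - x)).reverse))

/-- the finset of one-line notations of permutations of `{1,…,n}` -/
def perms (n : ℕ) : Finset (List ℕ) :=
  (((List.range n).map (· + 1)).permutations).toFinset

/-- the q-factorial `[n]_q!` -/
def qFact {R : Type*} [CommSemiring R] (q : R) (n : ℕ) : R :=
  ∏ k ∈ Finset.range n, ∑ j ∈ Finset.range (k + 1), q ^ j

end BS
namespace BSAux
open Finset

lemma getD_insertIdx (σ : List ℕ) (c v i : ℕ) (hc : c ≤ σ.length) :
    (σ.insertIdx c v).getD i 0 =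
      if i < c then σ.getD i 0 else if i = c then v else σ.getD (i-1) 0 := by
  have hlen : (σ.insertIdx c v).length = σ.length + 1 := List.length_insertIdx_of_le_length hc v
  rcases lt_trichotomy i c with h | h | h
  · rw [if_pos h]
    have hi : i < σ.length := lt_of_lt_of_le h hc
    rw [List.getD_eq_getElem _ _ (by omega), List.getD_eq_getElem _ _ hi,
      List.getElem_insertIdx_of_lt h (by omega)]
  · subst h
    rw [if_neg (lt_irrefl _), if_pos rfl, List.getD_eq_getElem _ _ (by omega),
      List.getElem_insertIdx_self (by omega)]
  · rw [if_neg (by omega), if_neg (by omega)]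
    by_cases hi : i - 1 < σ.length
    · have h2 : c + (i - c - 1) < σ.length := by omega
      have h3 := List.getElem_insertIdx_add_succ σ v c (i - c - 1) h2
      rw [List.getD_eq_getElem _ _ (by omega), List.getD_eq_getElem _ _ hi]
      simp only [show c + (i - c - 1) = i - 1 by omega, show i - 1 + 1 = i by omega] at h3
      exact h3
    · rw [List.getD_eq_default _ _ (by omega), List.getD_eq_default _ _ (by omega)]

lemma sum_shift (g : ℕ → ℕ) (c m : ℕ) (hc : c ≤ m) :
    ∑ i ∈ range (m+1), g i = g c + ∑ i ∈ range m, g (if i < c then i else i + 1) := by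
  have h1 : ∑ i ∈ range m, g (if i < c then i else i + 1)
      = ∑ i ∈ Ico 0 c, g i + ∑ i ∈ Ico c m, g (i + 1) := by
    rw [range_eq_Ico, ← Finset.sum_Ico_consecutive _ (Nat.zero_le c) hc]
    congr 1
    · exact Finset.sum_congr rfl fun i hi => by rw [if_pos (mem_Ico.mp hi).2]
    · exact Finset.sum_congr rfl fun i hi => by rw [if_neg (by simpa using (mem_Ico.mp hi).1.not_gt)]
  have h2 : ∑ i ∈ range (m+1), g i = ∑ i ∈ Ico 0 c, g i + (g c + ∑ i ∈ Ico (c+1) (m+1), g i) := by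
    have := Finset.sum_eq_sum_Ico_succ_bot (a := c) (b := m+1) (by omega) g
    rw [range_eq_Ico, ← Finset.sum_Ico_consecutive g (Nat.zero_le c) (by omega), this]
  have h3 : ∑ i ∈ Ico (c+1) (m+1), g i = ∑ i ∈ Ico c m, g (i + 1) := by
    rw [Finset.sum_Ico_eq_sum_range, Finset.sum_Ico_eq_sum_range]
    have : m + 1 - (c + 1) = m - c := by omega
    rw [this]
    exact Finset.sum_congr rfl fun i _ => by congr 1; omega
  rw [h2, h3, h1]; omega

end BSAux

namespace BSAux
open Finset

lemma core (P : ℕ → ℕ → ℕ → Prop) [∀ x y z, Decidable (P x y z)] (σ : List ℕ) (v j : ℕ)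
    (hj : j + 2 ≤ σ.length) :
    (∑ p ∈ range (σ.length+1), ∑ q ∈ range (σ.length+1),
        if p+2 ≤ q ∧ P ((σ.insertIdx (j+1) v).getD p 0) ((σ.insertIdx (j+1) v).getD (p+1) 0)
            ((σ.insertIdx (j+1) v).getD q 0) then 1 else 0)
      + (∑ q ∈ range σ.length, if j+2 ≤ q ∧ P (σ.getD j 0) (σ.getD (j+1) 0) (σ.getD q 0) then 1 else 0)
    = (∑ p ∈ range σ.length, ∑ q ∈ range σ.length,
        if p+2 ≤ q ∧ P (σ.getD p 0) (σ.getD (p+1) 0) (σ.getD q 0) then 1 else 0)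
      + (∑ p ∈ range σ.length, if p+2 ≤ j+1 ∧ P (σ.getD p 0) (σ.getD (p+1) 0) v then 1 else 0)
      + (∑ q ∈ range σ.length, if j+1 ≤ q ∧ P (σ.getD j 0) v (σ.getD q 0) then 1 else 0)
      + (∑ q ∈ range σ.length, if j+2 ≤ q ∧ P v (σ.getD (j+1) 0) (σ.getD q 0) then 1 else 0) := by
  set m := σ.length with hm
  set τ := σ.insertIdx (j+1) v with hτ
  set a : ℕ → ℕ := fun i => σ.getD i 0 with ha
  set b : ℕ → ℕ := fun i => τ.getD i 0 with hbdef
  have hb : ∀ i, b i = if i < j+1 then a i else if i = j+1 then v else a (i-1) :=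
    fun i => getD_insertIdx σ (j+1) v i (by omega)
  have hbsh : ∀ i, b (if i < j+1 then i else i+1) = a i := by
    intro i
    rcases lt_or_ge i (j+1) with h|h
    · rw [if_pos h, hb, if_pos h]
    · rw [if_neg (by omega), hb, if_neg (by omega), if_neg (by omega)]
      simp [ha]
  have hbc : b (j+1) = v := by rw [hb, if_neg (by omega), if_pos rfl]
  have hbc1 : b (j+2) = a (j+1) := by
    rw [hb, if_neg (by omega), if_neg (by omega)]; simp [ha]
  have hbsh1 : ∀ i, i ≠ j → b ((if i < j+1 then i else i+1) + 1) = a (i+1) := by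
    intro i hi
    rcases lt_or_ge i (j+1) with h|h
    · rw [if_pos h, hb, if_pos (by omega)]
    · rw [if_neg (by omega), hb, if_neg (by omega), if_neg (by omega)]
      simp [ha]
  -- abbreviations
  have step1 := sum_shift (fun p => ∑ q ∈ range (m+1),
      if p+2 ≤ q ∧ P (b p) (b (p+1)) (b q) then 1 else 0) (j+1) m (by omega)
  have step2 := sum_shift (fun q => if (j+1)+2 ≤ q ∧ P (b (j+1)) (b (j+2)) (b q) then 1 else 0)
      (j+1) m (by omega)
  have step3 : ∀ p, (∑ q ∈ range (m+1), if p+2 ≤ q ∧ P (b p) (b (p+1)) (b q) then 1 else 0)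
      = (if p+2 ≤ j+1 ∧ P (b p) (b (p+1)) (b (j+1)) then 1 else 0)
        + ∑ q ∈ range m, (if p+2 ≤ (if q < j+1 then q else q+1) ∧ P (b p) (b (p+1)) (b (if q < j+1 then q else q+1)) then 1 else 0) :=
    fun p => sum_shift (fun q => if p+2 ≤ q ∧ P (b p) (b (p+1)) (b q) then 1 else 0) (j+1) m (by omega)

  have folda : ∀ i, σ.getD i 0 = a i := fun i => rfl
  have foldb : ∀ i, τ.getD i 0 = b i := fun i => rfl
  simp only [folda, foldb]
  -- name the pieces
  have step1 : (∑ p ∈ range (m+1), ∑ q ∈ range (m+1),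
        if p+2 ≤ q ∧ P (b p) (b (p+1)) (b q) then 1 else 0)
      = (∑ q ∈ range (m+1), if (j+1)+2 ≤ q ∧ P (b (j+1)) (b (j+1+1)) (b q) then 1 else 0)
        + ∑ p ∈ range m, ∑ q ∈ range (m+1),
            if (if p < j+1 then p else p+1)+2 ≤ q ∧ P (b (if p < j+1 then p else p+1)) (b ((if p < j+1 then p else p+1)+1)) (b q) then 1 else 0 :=
    sum_shift _ (j+1) m (by omega)
  have step2 : (∑ q ∈ range (m+1), if (j+1)+2 ≤ q ∧ P (b (j+1)) (b (j+1+1)) (b q) then 1 else 0)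
      = (if (j+1)+2 ≤ j+1 ∧ P (b (j+1)) (b (j+1+1)) (b (j+1)) then 1 else 0)
        + ∑ q ∈ range m, (if (j+1)+2 ≤ (if q < j+1 then q else q+1) ∧ P (b (j+1)) (b (j+1+1)) (b (if q < j+1 then q else q+1)) then 1 else 0) :=
    sum_shift _ (j+1) m (by omega)
  have step3 : (∑ p ∈ range m, ∑ q ∈ range (m+1),
        if (if p < j+1 then p else p+1)+2 ≤ q ∧ P (b (if p < j+1 then p else p+1)) (b ((if p < j+1 then p else p+1)+1)) (b q) then 1 else 0)
      = ∑ p ∈ range m, ((if (if p < j+1 then p else p+1)+2 ≤ j+1 ∧ P (b (if p < j+1 then p else p+1)) (b ((if p < j+1 then p else p+1)+1)) (b (j+1)) then 1 else 0)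
        + ∑ q ∈ range m, (if (if p < j+1 then p else p+1)+2 ≤ (if q < j+1 then q else q+1) ∧ P (b (if p < j+1 then p else p+1)) (b ((if p < j+1 then p else p+1)+1)) (b (if q < j+1 then q else q+1)) then 1 else 0)) :=
    Finset.sum_congr rfl fun p _ => sum_shift _ (j+1) m (by omega)
  have step4 : (∑ p ∈ range m, ((if (if p < j+1 then p else p+1)+2 ≤ j+1 ∧ P (b (if p < j+1 then p else p+1)) (b ((if p < j+1 then p else p+1)+1)) (b (j+1)) then 1 else 0)
        + ∑ q ∈ range m, (if (if p < j+1 then p else p+1)+2 ≤ (if q < j+1 then q else q+1) ∧ P (b (if p < j+1 then p else p+1)) (b ((if p < j+1 then p else p+1)+1)) (b (if q < j+1 then q else q+1)) then 1 else 0)))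
      = (∑ p ∈ range m, (if (if p < j+1 then p else p+1)+2 ≤ j+1 ∧ P (b (if p < j+1 then p else p+1)) (b ((if p < j+1 then p else p+1)+1)) (b (j+1)) then 1 else 0))
        + ∑ p ∈ range m, ∑ q ∈ range m,
            (if (if p < j+1 then p else p+1)+2 ≤ (if q < j+1 then q else q+1) ∧ P (b (if p < j+1 then p else p+1)) (b ((if p < j+1 then p else p+1)+1)) (b (if q < j+1 then q else q+1)) then 1 else 0) :=
    Finset.sum_add_distrib
  have hdiag : (if (j+1)+2 ≤ j+1 ∧ P (b (j+1)) (b (j+1+1)) (b (j+1)) then 1 else 0) = 0 :=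
    if_neg (fun h => by omega)
  have hY3 : (∑ q ∈ range m, (if (j+1)+2 ≤ (if q < j+1 then q else q+1) ∧ P (b (j+1)) (b (j+1+1)) (b (if q < j+1 then q else q+1)) then 1 else 0))
      = ∑ q ∈ range m, (if j+2 ≤ q ∧ P v (a (j+1)) (a q) then 1 else 0) := by
    refine Finset.sum_congr rfl fun q _ => ?_
    rw [hbc, hbc1, hbsh q]
    refine if_congr (and_congr_left' ?_) rfl rfl
    split_ifs <;> omega
  have hY1 : (∑ p ∈ range m, (if (if p < j+1 then p else p+1)+2 ≤ j+1 ∧ P (b (if p < j+1 then p else p+1)) (b ((if p < j+1 then p else p+1)+1)) (b (j+1)) then 1 else 0))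
      = ∑ p ∈ range m, (if p+2 ≤ j+1 ∧ P (a p) (a (p+1)) v then 1 else 0) := by
    refine Finset.sum_congr rfl fun p _ => ?_
    by_cases hpj : p = j
    · subst hpj
      rw [if_neg (fun h => by revert h; split_ifs <;> omega),
        if_neg (fun h => by omega)]
    · rw [hbc, hbsh p, hbsh1 p hpj]
      refine if_congr (and_congr_left' ?_) rfl rfl
      split_ifs <;> omega
  have hjm : j ∈ range m := mem_range.mpr (by omega)
  have hrow : ∀ p ∈ (range m).erase j,
      (∑ q ∈ range m, (if (if p < j+1 then p else p+1)+2 ≤ (if q < j+1 then q else q+1) ∧ P (b (if p < j+1 then p else p+1)) (b ((if p < j+1 then p else p+1)+1)) (b (if q < j+1 then q else q+1)) then 1 else 0))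
      = ∑ q ∈ range m, (if p+2 ≤ q ∧ P (a p) (a (p+1)) (a q) then 1 else 0) := by
    intro p hp
    have hpj : p ≠ j := (Finset.mem_erase.mp hp).1
    refine Finset.sum_congr rfl fun q _ => ?_
    rw [hbsh p, hbsh q, hbsh1 p hpj]
    refine if_congr (and_congr_left' ?_) rfl rfl
    split_ifs <;> omega
  have hrowj : (∑ q ∈ range m, (if (if j < j+1 then j else j+1)+2 ≤ (if q < j+1 then q else q+1)
          ∧ P (b (if j < j+1 then j else j+1)) (b ((if j < j+1 then j else j+1)+1)) (b (if q < j+1 then q else q+1)) then 1 else 0))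
      = ∑ q ∈ range m, (if j+1 ≤ q ∧ P (a j) v (a q) then 1 else 0) := by
    refine Finset.sum_congr rfl fun q _ => ?_
    rw [hbsh j, hbsh q, if_pos (Nat.lt_succ_self j), hbc]
    refine if_congr (and_congr_left' ?_) rfl rfl
    split_ifs <;> omega
  have hmain : (∑ p ∈ range m, ∑ q ∈ range m,
        (if (if p < j+1 then p else p+1)+2 ≤ (if q < j+1 then q else q+1) ∧ P (b (if p < j+1 then p else p+1)) (b ((if p < j+1 then p else p+1)+1)) (b (if q < j+1 then q else q+1)) then 1 else 0))
        + (∑ q ∈ range m, if j+2 ≤ q ∧ P (a j) (a (j+1)) (a q) then 1 else 0)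
      = (∑ p ∈ range m, ∑ q ∈ range m, (if p+2 ≤ q ∧ P (a p) (a (p+1)) (a q) then 1 else 0))
        + ∑ q ∈ range m, (if j+1 ≤ q ∧ P (a j) v (a q) then 1 else 0) := by
    rw [← Finset.add_sum_erase _ (fun p => ∑ q ∈ range m,
        (if (if p < j+1 then p else p+1)+2 ≤ (if q < j+1 then q else q+1) ∧ P (b (if p < j+1 then p else p+1)) (b ((if p < j+1 then p else p+1)+1)) (b (if q < j+1 then q else q+1)) then 1 else 0)) hjm,
      ← Finset.add_sum_erase _ (fun p => ∑ q ∈ range m,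
        (if p+2 ≤ q ∧ P (a p) (a (p+1)) (a q) then 1 else 0)) hjm,
      Finset.sum_congr rfl hrow, hrowj]
    omega
  beta_reduce at step1 step2 step3 step4
  omega

end BSAux

namespace BSAux
open Finset

lemma des_insert (σ : List ℕ) (v j : ℕ) (hj2 : j + 2 ≤ σ.length)
    (hdesc : σ.getD (j+1) 0 < σ.getD j 0) (hv : ∀ i, i < σ.length → σ.getD i 0 < v) :
    BS.des (σ.insertIdx (j+1) v) = BS.des σ := by
  unfold BS.des BS.desSet
  rw [Finset.card_filter, Finset.card_filter]
  have hlen : (σ.insertIdx (j+1) v).length = σ.length + 1 := List.length_insertIdx_of_le_length (by omega) _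
  have hb : ∀ i, (σ.insertIdx (j+1) v).getD i 0 =
      if i < j+1 then σ.getD i 0 else if i = j+1 then v else σ.getD (i-1) 0 :=
    fun i => getD_insertIdx σ (j+1) v i (by omega)
  have h1 : (σ.insertIdx (j+1) v).length - 1 = (σ.length - 1) + 1 := by omega
  rw [h1]
  have step := sum_shift (fun i => if (σ.insertIdx (j+1) v).getD (i+1) 0 <
      (σ.insertIdx (j+1) v).getD i 0 then 1 else 0) j (σ.length - 1) (by omega)
  beta_reduce at step
  have h2 : (if (σ.insertIdx (j+1) v).getD (j+1) 0 < (σ.insertIdx (j+1) v).getD j 0 then 1 else 0)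
      = 0 := by
    have hvj := hv j (by omega)
    rw [hb (j+1), hb j, if_pos (show j < j+1 by omega),
      if_neg (show ¬ (j+1 < j+1) by omega), if_pos (rfl : j+1 = j+1),
      if_neg (show ¬ (v < σ.getD j 0) by omega)]
  have h3 : (∑ i ∈ range (σ.length - 1),
        if (σ.insertIdx (j+1) v).getD ((if i < j then i else i+1)+1) 0 <
          (σ.insertIdx (j+1) v).getD (if i < j then i else i+1) 0 then 1 else 0)
      = ∑ i ∈ range (σ.length - 1), if σ.getD (i+1) 0 < σ.getD i 0 then 1 else 0 := by
    refine Finset.sum_congr rfl fun i hi => ?_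
    have hi' := Finset.mem_range.mp hi
    rcases lt_trichotomy i j with h | h | h
    · rw [if_pos h, hb (i+1), if_pos (show i+1 < j+1 by omega), hb i,
        if_pos (show i < j+1 by omega)]
    · subst h
      have hv1 := hv (i+1) (by omega)
      rw [if_neg (show ¬ i < i by omega), hb (i+1+1),
        if_neg (show ¬ (i+1+1 < i+1) by omega), if_neg (show ¬ (i+1+1 = i+1) by omega),
        hb (i+1), if_neg (show ¬ (i+1 < i+1) by omega), if_pos (rfl : i+1 = i+1)]
      simp only [show i+1+1-1 = i+1 by omega]
      rw [if_pos hv1, if_pos hdesc]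
    · rw [if_neg (show ¬ i < j by omega), hb (i+1+1),
        if_neg (show ¬ (i+1+1 < j+1) by omega), if_neg (show ¬ (i+1+1 = j+1) by omega),
        hb (i+1), if_neg (show ¬ (i+1 < j+1) by omega), if_neg (show ¬ (i+1 = j+1) by omega)]
      simp only [show i+1+1-1 = i+1 by omega, show i+1-1 = i by omega]
  omega

lemma acb_sum (l : List ℕ) : BS.acb l = ∑ p ∈ Finset.range l.length, ∑ q ∈ Finset.range l.length,
    if p+2 ≤ q ∧ l.getD p 0 < l.getD q 0 ∧ l.getD q 0 < l.getD (p+1) 0 then 1 else 0 := by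
  unfold BS.acb; rw [Finset.card_filter, Finset.sum_product]

lemma bac_sum (l : List ℕ) : BS.bac l = ∑ p ∈ Finset.range l.length, ∑ q ∈ Finset.range l.length,
    if p+2 ≤ q ∧ l.getD (p+1) 0 < l.getD p 0 ∧ l.getD p 0 < l.getD q 0 then 1 else 0 := by
  unfold BS.bac; rw [Finset.card_filter, Finset.sum_product]

lemma cba_sum (l : List ℕ) : BS.cba l = ∑ p ∈ Finset.range l.length, ∑ q ∈ Finset.range l.length,
    if p+2 ≤ q ∧ l.getD q 0 < l.getD (p+1) 0 ∧ l.getD (p+1) 0 < l.getD p 0 then 1 else 0 := by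
  unfold BS.cba; rw [Finset.card_filter, Finset.sum_product]

end BSAux


/-- inserting `n` into the k-th descent (from the left) of σ adds
`k - 1` to stat.  Here the descent is between the (0-indexed) positions `j` and
`j + 1`, so `n` is inserted at list index `j + 1`, and `k - 1` is the number of
descents strictly to the left. -/
theorem stat_insert_descent (n : ℕ) (σ : List ℕ) (j k : ℕ)
    (hn : 1 ≤ n) (hσ : BS.isPerm σ (n - 1)) (hj : j ∈ BS.desSet σ)
    (hk : k = ((BS.desSet σ).filter (· < j)).card + 1) :
    BS.stat (σ.insertIdx (j + 1) n) = BS.stat σ + (k - 1) := by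
  have hjd : j < σ.length - 1 ∧ σ.getD (j+1) 0 < σ.getD j 0 := by
    have h := hj
    unfold BS.desSet at h
    simpa using h
  have hdesc := hjd.2
  have hj2 : j + 2 ≤ σ.length := by omega
  have hbig : ∀ i, i < σ.length → σ.getD i 0 < n := by
    intro i hi
    have hmem : σ.getD i 0 ∈ σ := by
      rw [List.getD_eq_getElem _ _ hi]; exact List.getElem_mem _
    have h2 := hσ.mem_iff.mp hmem
    simp only [List.mem_map, List.mem_range] at h2
    obtain ⟨y, hy1, hy2⟩ := h2
    omega
  have hlen : (σ.insertIdx (j+1) n).length = σ.length + 1 :=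
    List.length_insertIdx_of_le_length (by omega) _
  have hacbτ := BSAux.acb_sum (σ.insertIdx (j+1) n)
  have hbacτ := BSAux.bac_sum (σ.insertIdx (j+1) n)
  have hcbaτ := BSAux.cba_sum (σ.insertIdx (j+1) n)
  rw [hlen] at hacbτ hbacτ hcbaτ
  have hacbσ := BSAux.acb_sum σ
  have hbacσ := BSAux.bac_sum σ
  have hcbaσ := BSAux.cba_sum σ
  have hcore1 : (∑ p ∈ Finset.range (σ.length+1), ∑ q ∈ Finset.range (σ.length+1),
        if p+2 ≤ q ∧ ((σ.insertIdx (j+1) n).getD (p) 0 < (σ.insertIdx (j+1) n).getD (q) 0 ∧ (σ.insertIdx (j+1) n).getD (q) 0 < (σ.insertIdx (j+1) n).getD (p+1) 0) then 1 else 0)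
      + (∑ q ∈ Finset.range σ.length, if j+2 ≤ q ∧ (σ.getD (j) 0 < σ.getD (q) 0 ∧ σ.getD (q) 0 < σ.getD (j+1) 0) then 1 else 0)
    = (∑ p ∈ Finset.range σ.length, ∑ q ∈ Finset.range σ.length,
        if p+2 ≤ q ∧ (σ.getD (p) 0 < σ.getD (q) 0 ∧ σ.getD (q) 0 < σ.getD (p+1) 0) then 1 else 0)
      + (∑ p ∈ Finset.range σ.length, if p+2 ≤ j+1 ∧ (σ.getD (p) 0 < n ∧ n < σ.getD (p+1) 0) then 1 else 0)
      + (∑ q ∈ Finset.range σ.length, if j+1 ≤ q ∧ (σ.getD (j) 0 < σ.getD (q) 0 ∧ σ.getD (q) 0 < n) then 1 else 0)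
      + (∑ q ∈ Finset.range σ.length, if j+2 ≤ q ∧ (n < σ.getD (q) 0 ∧ σ.getD (q) 0 < σ.getD (j+1) 0) then 1 else 0) := BSAux.core (fun x y z => x < z ∧ z < y) σ n j hj2

  have hcore2 : (∑ p ∈ Finset.range (σ.length+1), ∑ q ∈ Finset.range (σ.length+1),
        if p+2 ≤ q ∧ ((σ.insertIdx (j+1) n).getD (p+1) 0 < (σ.insertIdx (j+1) n).getD (p) 0 ∧ (σ.insertIdx (j+1) n).getD (p) 0 < (σ.insertIdx (j+1) n).getD (q) 0) then 1 else 0)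
      + (∑ q ∈ Finset.range σ.length, if j+2 ≤ q ∧ (σ.getD (j+1) 0 < σ.getD (j) 0 ∧ σ.getD (j) 0 < σ.getD (q) 0) then 1 else 0)
    = (∑ p ∈ Finset.range σ.length, ∑ q ∈ Finset.range σ.length,
        if p+2 ≤ q ∧ (σ.getD (p+1) 0 < σ.getD (p) 0 ∧ σ.getD (p) 0 < σ.getD (q) 0) then 1 else 0)
      + (∑ p ∈ Finset.range σ.length, if p+2 ≤ j+1 ∧ (σ.getD (p+1) 0 < σ.getD (p) 0 ∧ σ.getD (p) 0 < n) then 1 else 0)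
      + (∑ q ∈ Finset.range σ.length, if j+1 ≤ q ∧ (n < σ.getD (j) 0 ∧ σ.getD (j) 0 < σ.getD (q) 0) then 1 else 0)
      + (∑ q ∈ Finset.range σ.length, if j+2 ≤ q ∧ (σ.getD (j+1) 0 < n ∧ n < σ.getD (q) 0) then 1 else 0) := BSAux.core (fun x y z => y < x ∧ x < z) σ n j hj2

  have hcore3 : (∑ p ∈ Finset.range (σ.length+1), ∑ q ∈ Finset.range (σ.length+1),
        if p+2 ≤ q ∧ ((σ.insertIdx (j+1) n).getD (q) 0 < (σ.insertIdx (j+1) n).getD (p+1) 0 ∧ (σ.insertIdx (j+1) n).getD (p+1) 0 < (σ.insertIdx (j+1) n).getD (p) 0) then 1 else 0)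
      + (∑ q ∈ Finset.range σ.length, if j+2 ≤ q ∧ (σ.getD (q) 0 < σ.getD (j+1) 0 ∧ σ.getD (j+1) 0 < σ.getD (j) 0) then 1 else 0)
    = (∑ p ∈ Finset.range σ.length, ∑ q ∈ Finset.range σ.length,
        if p+2 ≤ q ∧ (σ.getD (q) 0 < σ.getD (p+1) 0 ∧ σ.getD (p+1) 0 < σ.getD (p) 0) then 1 else 0)
      + (∑ p ∈ Finset.range σ.length, if p+2 ≤ j+1 ∧ (n < σ.getD (p+1) 0 ∧ σ.getD (p+1) 0 < σ.getD (p) 0) then 1 else 0)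
      + (∑ q ∈ Finset.range σ.length, if j+1 ≤ q ∧ (σ.getD (q) 0 < n ∧ n < σ.getD (j) 0) then 1 else 0)
      + (∑ q ∈ Finset.range σ.length, if j+2 ≤ q ∧ (σ.getD (q) 0 < σ.getD (j+1) 0 ∧ σ.getD (j+1) 0 < n) then 1 else 0) := BSAux.core (fun x y z => z < y ∧ y < x) σ n j hj2

  -- acb pieces
  have hX1 : (∑ q ∈ Finset.range σ.length, if j+2 ≤ q ∧ (σ.getD (j) 0 < σ.getD (q) 0 ∧ σ.getD (q) 0 < σ.getD (j+1) 0) then 1 else 0) = 0 :=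
    Finset.sum_eq_zero fun q _ => if_neg (by rintro ⟨h1, h2, h3⟩; omega)
  have hY11 : (∑ p ∈ Finset.range σ.length, if p+2 ≤ j+1 ∧ (σ.getD (p) 0 < n ∧ n < σ.getD (p+1) 0) then 1 else 0) = 0 :=
    Finset.sum_eq_zero fun p _ => if_neg (by
      rintro ⟨h1, h2, h3⟩
      have := hbig (p+1) (by omega)
      omega)
  have hY13 : (∑ q ∈ Finset.range σ.length, if j+2 ≤ q ∧ (n < σ.getD (q) 0 ∧ σ.getD (q) 0 < σ.getD (j+1) 0) then 1 else 0) = 0 :=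
    Finset.sum_eq_zero fun q hq => if_neg (by
      rintro ⟨h1, h2, h3⟩
      have := hbig q (Finset.mem_range.mp hq)
      omega)
  have hY12 : (∑ q ∈ Finset.range σ.length, if j+1 ≤ q ∧ (σ.getD (j) 0 < σ.getD (q) 0 ∧ σ.getD (q) 0 < n) then 1 else 0) = (∑ q ∈ Finset.range σ.length, if j+2 ≤ q ∧ σ.getD (j) 0 < σ.getD (q) 0 then 1 else 0) := by
    refine Finset.sum_congr rfl fun q hq => ?_
    have hq' := Finset.mem_range.mp hq
    have h1 := hbig q hq'
    refine if_congr ?_ rfl rfl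
    constructor
    · rintro ⟨ha1, ha2, ha3⟩
      rcases eq_or_lt_of_le ha1 with h | h
      · exfalso; rw [← h] at ha2; omega
      · exact ⟨by omega, ha2⟩
    · rintro ⟨ha1, ha2⟩
      exact ⟨by omega, ha2, h1⟩
  -- bac pieces
  have hX2 : (∑ q ∈ Finset.range σ.length, if j+2 ≤ q ∧ (σ.getD (j+1) 0 < σ.getD (j) 0 ∧ σ.getD (j) 0 < σ.getD (q) 0) then 1 else 0) = (∑ q ∈ Finset.range σ.length, if j+2 ≤ q ∧ σ.getD (j) 0 < σ.getD (q) 0 then 1 else 0) := by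
    refine Finset.sum_congr rfl fun q hq => ?_
    refine if_congr ?_ rfl rfl
    omega
  have hY21 : (∑ p ∈ Finset.range σ.length, if p+2 ≤ j+1 ∧ (σ.getD (p+1) 0 < σ.getD (p) 0 ∧ σ.getD (p) 0 < n) then 1 else 0) = (∑ p ∈ Finset.range σ.length, if p+2 ≤ j+1 ∧ σ.getD (p+1) 0 < σ.getD (p) 0 then 1 else 0) := by
    refine Finset.sum_congr rfl fun p hp => ?_
    have h1 := hbig p (Finset.mem_range.mp hp)
    refine if_congr ?_ rfl rfl
    omega
  have hY22 : (∑ q ∈ Finset.range σ.length, if j+1 ≤ q ∧ (n < σ.getD (j) 0 ∧ σ.getD (j) 0 < σ.getD (q) 0) then 1 else 0) = 0 :=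
    Finset.sum_eq_zero fun q _ => if_neg (by
      rintro ⟨h1, h2, h3⟩
      have := hbig j (by omega)
      omega)
  have hY23 : (∑ q ∈ Finset.range σ.length, if j+2 ≤ q ∧ (σ.getD (j+1) 0 < n ∧ n < σ.getD (q) 0) then 1 else 0) = 0 :=
    Finset.sum_eq_zero fun q hq => if_neg (by
      rintro ⟨h1, h2, h3⟩
      have := hbig q (Finset.mem_range.mp hq)
      omega)
  -- cba pieces
  have hX3 : (∑ q ∈ Finset.range σ.length, if j+2 ≤ q ∧ (σ.getD (q) 0 < σ.getD (j+1) 0 ∧ σ.getD (j+1) 0 < σ.getD (j) 0) then 1 else 0) = (∑ q ∈ Finset.range σ.length, if j+2 ≤ q ∧ σ.getD (q) 0 < σ.getD (j+1) 0 then 1 else 0) := by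
    refine Finset.sum_congr rfl fun q hq => ?_
    refine if_congr ?_ rfl rfl
    omega
  have hY31 : (∑ p ∈ Finset.range σ.length, if p+2 ≤ j+1 ∧ (n < σ.getD (p+1) 0 ∧ σ.getD (p+1) 0 < σ.getD (p) 0) then 1 else 0) = 0 :=
    Finset.sum_eq_zero fun p _ => if_neg (by
      rintro ⟨h1, h2, h3⟩
      have := hbig (p+1) (by omega)
      omega)
  have hY32 : (∑ q ∈ Finset.range σ.length, if j+1 ≤ q ∧ (σ.getD (q) 0 < n ∧ n < σ.getD (j) 0) then 1 else 0) = 0 :=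
    Finset.sum_eq_zero fun q _ => if_neg (by
      rintro ⟨h1, h2, h3⟩
      have := hbig j (by omega)
      omega)
  have hY33 : (∑ q ∈ Finset.range σ.length, if j+2 ≤ q ∧ (σ.getD (q) 0 < σ.getD (j+1) 0 ∧ σ.getD (j+1) 0 < n) then 1 else 0) = (∑ q ∈ Finset.range σ.length, if j+2 ≤ q ∧ σ.getD (q) 0 < σ.getD (j+1) 0 then 1 else 0) := by
    refine Finset.sum_congr rfl fun q hq => ?_
    have h1 := hbig (j+1) (by omega)
    refine if_congr ?_ rfl rfl
    omega
  have hdes : BS.des (σ.insertIdx (j+1) n) = BS.des σ := BSAux.des_insert σ n j hj2 hdesc hbig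
  have hK : (∑ p ∈ Finset.range σ.length, if p+2 ≤ j+1 ∧ σ.getD (p+1) 0 < σ.getD (p) 0 then 1 else 0) = ((BS.desSet σ).filter (· < j)).card := by
    unfold BS.desSet
    rw [Finset.filter_filter, Finset.card_filter]
    have e0 : ∀ x ∈ Finset.range σ.length, x ∉ Finset.range (σ.length - 1) →
        (if x+2 ≤ j+1 ∧ σ.getD (x+1) 0 < σ.getD (x) 0 then 1 else 0) = 0 := by
      intro x hx hx2
      simp only [Finset.mem_range] at hx hx2
      exact if_neg (by rintro ⟨h1, h2⟩; omega)
    rw [← Finset.sum_subset (Finset.range_subset_range.mpr (show σ.length - 1 ≤ σ.length by omega)) e0]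
    refine Finset.sum_congr rfl fun i hi => ?_
    exact if_congr ⟨fun h => ⟨h.2, by omega⟩, fun h => ⟨by omega, h.1⟩⟩ rfl rfl
  unfold BS.stat
  omega
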